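/- Let E be a directed graph such that: (a) each cycle of E is either without exits or extreme; (b) each infinite emitter of E lies on a cycle; and (c) for every infinite path α of E, only finitely many edges e with s(e) ∈ α⁰ satisfy r(e) ∉ R(α⁰). Then for every hereditary and saturated set H ⊆ E⁰ one has R(H) − H ⊆ R(H⊥). -/

import Mathlib

namespace GraphAnn

variable {V E : Type*}

/-- `u ≥ v`: there is a (possibly trivial) path from `u` to `v`. -/
def Reach (s r : E → V) : V → V → Prop :=
  Relation.ReflTransGen (fun a b => ∃ e, s e = a ∧ r e = b)

/-- The root `R(W)` of a set of vertices. -/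
def Root (s r : E → V) (W : Set V) : Set V :=
  {u | ∃ v ∈ W, Reach s r u v}

def Hereditary (s r : E → V) (H : Set V) : Prop :=
  ∀ u v, u ∈ H → Reach s r u v → v ∈ H

def IsSink (s : E → V) (v : V) : Prop := ∀ e : E, s e ≠ v

def IsInfiniteEmitter (s : E → V) (v : V) : Prop := {e : E | s e = v}.Infinite

def IsRegular (s : E → V) (v : V) : Prop := ¬ IsSink s v ∧ ¬ IsInfiniteEmitter s v

def Saturated (s r : E → V) (H : Set V) : Prop :=
  ∀ v, IsRegular s v → (∀ e : E, s e = v → r e ∈ H) → v ∈ H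

/-- `V⊥ = E⁰ − R(V)`. -/
def perp (s r : E → V) (W : Set V) : Set V := {v | v ∉ Root s r W}

/-- Breaking vertices `B_H`. -/
def Breaking (s r : E → V) (H : Set V) : Set V :=
  {v | v ∉ H ∧ IsInfiniteEmitter s v ∧
    {e : E | s e = v ∧ r e ∉ H}.Nonempty ∧ {e : E | s e = v ∧ r e ∉ H}.Finite}

/-- `(H,S)` is an admissible pair. -/
def Admissible (s r : E → V) (H S : Set V) : Prop :=
  Hereditary s r H ∧ Saturated s r H ∧ S ⊆ Breaking s r H

/-- `S⊥ = B_{H⊥} − S`. -/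
def Sperp (s r : E → V) (H S : Set V) : Set V := Breaking s r (perp s r H) \ S

/-- A cycle: a closed path of positive length in which distinct edges have
distinct sources. -/
structure GCycle (s r : E → V) where
  edges : List E
  ne : edges ≠ []
  chain : edges.Chain' (fun e f => r e = s f)
  closed : r (edges.getLast ne) = s (edges.head ne)
  srcNodup : (edges.map s).Nodup

/-- The vertex set `c⁰` of a cycle. -/
def GCycle.verts {s r : E → V} (c : GCycle s r) : Set V :=
  {v | ∃ e ∈ c.edges, s e = v}

/-- A cycle has an exit. -/
def GCycle.HasExit {s r : E → V} (c : GCycle s r) : Prop :=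
  ∃ e, s e ∈ c.verts ∧ e ∉ c.edges

/-- An extreme cycle: it has an exit and every exit returns. -/
def GCycle.Extreme {s r : E → V} (c : GCycle s r) : Prop :=
  c.HasExit ∧ ∀ v ∈ c.verts, ∀ w, Reach s r v w → ∃ u ∈ c.verts, Reach s r w u

/-- The vertex set `α⁰` of an infinite path `α`. -/
def InfPathVerts (s : E → V) (α : ℕ → E) : Set V := {v | ∃ n, s (α n) = v}

/-- Conditions (a), (b), (c): the graph is all-reflexive. -/
def AllReflexiveGraph (s r : E → V) : Prop :=
  (∀ c : GCycle s r, ¬ c.HasExit ∨ c.Extreme) ∧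
  (∀ v, IsInfiniteEmitter s v → ∃ c : GCycle s r, v ∈ c.verts) ∧
  (∀ α : ℕ → E, (∀ n, r (α n) = s (α (n + 1))) →
    {e : E | s e ∈ InfPathVerts s α ∧ r e ∉ Root s r (InfPathVerts s α)}.Finite)

/- ------------------ auxiliary lemmas ------------------ -/

section Walk

variable (s r : E → V)

lemma aux_chain_getElem {L : List E} (hc : L.Chain' (fun e f => r e = s f))
    {i : ℕ} (h : i + 1 < L.length) : r L[i] = s L[i + 1] := by
  have := List.isChain_iff_getElem.mp hc i (by omega)
  simpa using this

lemma aux_reach_getElem {L : List E} (hc : L.Chain' (fun e f => r e = s f))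
    {i j : ℕ} (hij : i ≤ j) (hj : j < L.length) :
    Reach s r (s (L[i]'(by omega))) (s L[j]) := by
  induction j, hij using Nat.le_induction with
  | base => exact Relation.ReflTransGen.refl
  | succ j hij ih =>
    exact (ih (by omega)).tail ⟨L[j], rfl, aux_chain_getElem s r hc hj⟩

lemma aux_reach_walk {L : List E} (hne : L ≠ [])
    (hc : L.Chain' (fun e f => r e = s f))
    (hcl : r (L.getLast hne) = s (L.head hne)) :
    ∀ e ∈ L, ∀ f ∈ L, Reach s r (s e) (s f) := by
  intro e he f hf
  obtain ⟨i, hi, rfl⟩ := List.mem_iff_getElem.mp he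
  obtain ⟨j, hj, rfl⟩ := List.mem_iff_getElem.mp hf
  have hlen : 0 < L.length := List.length_pos_iff.mpr hne
  have h1 : Reach s r (s L[i]) (s (L[L.length - 1]'(by omega))) :=
    aux_reach_getElem s r hc (by omega) (by omega)
  have h2 : Reach s r (s (L[0]'(by omega))) (s L[j]) :=
    aux_reach_getElem s r hc (by omega) hj
  refine (h1.tail ?_).trans h2
  refine ⟨L[L.length - 1]'(by omega), rfl, ?_⟩
  rw [List.getLast_eq_getElem, List.head_eq_getElem] at hcl
  exact hcl

lemma aux_range_mem {s r : E → V} (c : GCycle s r) {e : E} (he : e ∈ c.edges) :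
    r e ∈ c.verts := by
  obtain ⟨i, hi, rfl⟩ := List.mem_iff_getElem.mp he
  by_cases h : i + 1 < c.edges.length
  · exact ⟨c.edges[i+1], List.getElem_mem _, (aux_chain_getElem s r c.chain h).symm⟩
  · have hi' : i = c.edges.length - 1 := by omega
    refine ⟨c.edges.head c.ne, List.head_mem _, ?_⟩
    rw [List.head_eq_getElem] at *
    have := c.closed
    rw [List.getLast_eq_getElem] at this
    rw [List.head_eq_getElem] at this
    subst hi'
    exact this.symm

lemma aux_cycle_of_walk (s r : E → V) :
    ∀ n (L : List E), L.length = n → (hne : L ≠ []) →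
    L.Chain' (fun e f => r e = s f) →
    r (L.getLast hne) = s (L.head hne) →
    ∃ c : GCycle s r, ∀ e ∈ c.edges, e ∈ L := by
  intro n
  induction n using Nat.strong_induction_on with
  | _ n ih =>
    intro L hlen hne hc hcl
    by_cases hnd : (L.map s).Nodup
    · exact ⟨⟨L, hne, hc, hcl, hnd⟩, fun e he => he⟩
    · rw [List.nodup_iff_injective_get] at hnd
      simp only [Function.Injective, not_forall] at hnd
      obtain ⟨a, b, hab, hne2⟩ := hnd
      wlog hlt : (a : ℕ) < (b : ℕ) generalizing a b
      · exact this b a hab.symm (Ne.symm hne2) (by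
          rcases lt_or_gt_of_ne (fun h => hne2 (Fin.ext h)) with h | h
          · omega
          · exact h)
      set i := (a : ℕ) with hidef
      set j := (b : ℕ) with hjdef
      have hjlen : j < L.length := by
        have := b.isLt; simpa using this
      have hsij : s (L[i]'(by omega)) = s (L[j]'hjlen) := by
        have := hab
        simp only [List.get_eq_getElem, List.getElem_map] at this
        simpa using this
      set L' := (L.drop i).take (j - i) with hL'
      have hlen' : L'.length = j - i := by
        simp [hL', List.length_take, List.length_drop]
        omega
      have hget' : ∀ (m : ℕ) (hm : m < L'.length), L'[m] = L[i + m]'(by omega) := by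
        intro m hm
        show ((L.drop i).take (j - i))[m]'(by simpa [hL'] using hm) = _
        rw [List.getElem_take, List.getElem_drop]
      have hne' : L' ≠ [] := by
        intro h
        rw [h] at hlen'
        simp at hlen'
        omega
      have hinf : L' <:+: L :=
        ((L.drop i).take_prefix (j - i)).isInfix.trans (L.drop_suffix i).isInfix
      have hc' : L'.Chain' (fun e f => r e = s f) := hc.infix hinf
      have hcl' : r (L'.getLast hne') = s (L'.head hne') := by
        have h3 : r (L[j-1]'(by omega)) = s (L[j]'hjlen) := by
          have h4 := aux_chain_getElem s r hc (i := j - 1) (by omega)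
          have e : j - 1 + 1 = j := by omega
          simp only [e] at h4
          exact h4
        rw [List.getLast_eq_getElem, List.head_eq_getElem, hget', hget']
        have e1 : i + (L'.length - 1) = j - 1 := by omega
        simp only [Nat.add_zero, e1]
        exact h3.trans hsij.symm
      obtain ⟨c, hcL⟩ := ih L'.length (by omega) L' rfl hne' hc' hcl'
      exact ⟨c, fun e he => hinf.mem (hcL e he)⟩

end Walk

section Dist

variable (s r : E → V)

def StepN : ℕ → V → V → Prop
  | 0, a, b => a = b
  | n + 1, a, b => ∃ e, s e = a ∧ StepN n (r e) b

lemma stepN_zero {a b : V} : StepN s r 0 a b ↔ a = b := Iff.rfl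

lemma stepN_succ {n : ℕ} {a b : V} :
    StepN s r (n + 1) a b ↔ ∃ e, s e = a ∧ StepN s r n (r e) b := Iff.rfl

lemma stepN_tail {n : ℕ} {a b c : V} (h : StepN s r n a b)
    (h2 : ∃ e, s e = b ∧ r e = c) : StepN s r (n + 1) a c := by
  induction n generalizing a with
  | zero =>
    rw [stepN_zero] at h
    subst h
    obtain ⟨e, he1, he2⟩ := h2
    exact ⟨e, he1, he2⟩
  | succ n ih =>
    obtain ⟨e, he1, he3⟩ := h
    exact ⟨e, he1, ih he3⟩

lemma reach_iff_stepN {a b : V} : Reach s r a b ↔ ∃ n, StepN s r n a b := by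
  constructor
  · intro h
    induction h with
    | refl => exact ⟨0, rfl⟩
    | tail h1 h2 ih =>
      obtain ⟨n, hn⟩ := ih
      exact ⟨n + 1, stepN_tail s r hn h2⟩
  · rintro ⟨n, hn⟩
    induction n generalizing a with
    | zero =>
      rw [stepN_zero s r] at hn
      subst hn
      exact Relation.ReflTransGen.refl
    | succ n ih =>
      obtain ⟨e, he, h'⟩ := hn
      exact Relation.ReflTransGen.head ⟨e, he, rfl⟩ (ih h')

noncomputable def dist (H : Set V) (v : V) : ℕ :=
  sInf {n | ∃ h ∈ H, StepN s r n v h}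

def Trapped (H : Set V) (v : V) : Prop :=
  v ∉ H ∧ ∀ w, Reach s r v w → w ∈ Root s r H

lemma trapped_dist_nonempty {H : Set V} {v : V} (hT : Trapped s r H v) :
    {n | ∃ h ∈ H, StepN s r n v h}.Nonempty := by
  obtain ⟨h, hH, hreach⟩ := hT.2 v Relation.ReflTransGen.refl
  obtain ⟨n, hn⟩ := (reach_iff_stepN s r).mp hreach
  exact ⟨n, h, hH, hn⟩

lemma trapped_dist_pos {H : Set V} {v : V} (hT : Trapped s r H v) :
    1 ≤ dist s r H v := by
  by_contra hlt
  have h0 : dist s r H v = 0 := by omega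
  have hmem : ∃ h ∈ H, StepN s r (dist s r H v) v h :=
    Nat.sInf_mem (trapped_dist_nonempty s r hT)
  obtain ⟨h, hH, hn⟩ := hmem
  rw [h0, stepN_zero] at hn
  exact hT.1 (hn ▸ hH)

lemma trapped_no_cycle (hA : ∀ c : GCycle s r, ¬ c.HasExit ∨ c.Extreme)
    {H : Set V} (hHer : Hereditary s r H) (c : GCycle s r) {v0 : V}
    (hv0 : v0 ∈ c.verts) (hT : Trapped s r H v0) : False := by
  obtain ⟨hv0H, hQ⟩ := hT
  obtain ⟨h, hH, hreach⟩ := hQ v0 Relation.ReflTransGen.refl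
  have hmut : ∀ x ∈ c.verts, ∀ y ∈ c.verts, Reach s r x y := by
    rintro x ⟨e, he, rfl⟩ y ⟨f, hf, rfl⟩
    exact aux_reach_walk s r c.ne c.chain c.closed e he f hf
  have hnotH : ∀ w ∈ c.verts, w ∉ H := by
    intro w hw hwH
    exact hv0H (hHer w v0 hwH (hmut w hw v0 hv0))
  rcases hA c with hno | hext
  · have hcl : ∀ w, Reach s r v0 w → w ∈ c.verts := by
      intro w hw
      induction hw with
      | refl => exact hv0
      | tail h1 h2 ih =>
        obtain ⟨e, he1, he2⟩ := h2
        have heC : e ∈ c.edges := by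
          by_contra hec
          exact hno ⟨e, he1 ▸ ih, hec⟩
        exact he2 ▸ aux_range_mem c heC
    exact hnotH h (hcl h hreach) hH
  · obtain ⟨w, hw, hrw⟩ := hext.2 v0 hv0 h hreach
    exact hnotH w hw (hHer h w hH hrw)

lemma trapped_regular (hAll : AllReflexiveGraph s r) {H : Set V}
    (hHer : Hereditary s r H) {v : V} (hT : Trapped s r H v) :
    IsRegular s v := by
  obtain ⟨h, hH, hreach⟩ := hT.2 v Relation.ReflTransGen.refl
  constructor
  · intro hsink
    rcases hreach.cases_head with heq | ⟨c, ⟨e, he1, _⟩, _⟩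
    · exact hT.1 (heq ▸ hH)
    · exact hsink e he1
  · intro hInf
    obtain ⟨c, hc⟩ := hAll.2.1 v hInf
    exact trapped_no_cycle s r hAll.1 hHer c hc hT

lemma trapped_next (hAll : AllReflexiveGraph s r) {H : Set V}
    (hHer : Hereditary s r H) (hSat : Saturated s r H) {v : V}
    (hT : Trapped s r H v) :
    ∃ e, s e = v ∧ Trapped s r H (r e) ∧
      (1 < dist s r H v → dist s r H (r e) < dist s r H v) := by
  have hpos := trapped_dist_pos s r hT
  have hmem : ∃ h ∈ H, StepN s r (dist s r H v) v h :=
    Nat.sInf_mem (trapped_dist_nonempty s r hT)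
  have hQ' : ∀ e, s e = v → ∀ w, Reach s r (r e) w → w ∈ Root s r H :=
    fun e hse w hw => hT.2 w (Relation.ReflTransGen.head ⟨e, hse, rfl⟩ hw)
  by_cases h1 : dist s r H v = 1
  · have hreg := trapped_regular s r hAll hHer hT
    have hesc : ¬ ∀ e, s e = v → r e ∈ H := fun hall => hT.1 (hSat v hreg hall)
    push_neg at hesc
    obtain ⟨e, hse, hre⟩ := hesc
    exact ⟨e, hse, ⟨hre, hQ' e hse⟩, fun hlt => by omega⟩
  · obtain ⟨h, hH, hn⟩ := hmem
    obtain ⟨k, hk⟩ : ∃ k, dist s r H v = k + 1 := ⟨dist s r H v - 1, by omega⟩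
    rw [hk, stepN_succ] at hn
    obtain ⟨e, hse, hn'⟩ := hn
    have hdle : dist s r H (r e) ≤ k := Nat.sInf_le ⟨h, hH, hn'⟩
    have hre : r e ∉ H := by
      intro hreH
      have hone : 1 ∈ {n | ∃ h ∈ H, StepN s r n v h} :=
        ⟨r e, hreH, e, hse, rfl⟩
      have hle1 : dist s r H v ≤ 1 := Nat.sInf_le hone
      omega
    exact ⟨e, hse, ⟨hre, hQ' e hse⟩, fun _ => by omega⟩

lemma no_trapped (hAll : AllReflexiveGraph s r) {H : Set V}
    (hHer : Hereditary s r H) (hSat : Saturated s r H)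
    {u : V} (hT : Trapped s r H u) : False := by
  classical
  have hnext := fun v (h : Trapped s r H v) => trapped_next s r hAll hHer hSat h
  choose f hf1 hf2 hf3 using hnext
  let π : {v // Trapped s r H v} → {v // Trapped s r H v} :=
    fun x => ⟨r (f x.1 x.2), hf2 x.1 x.2⟩
  let vs : ℕ → {v // Trapped s r H v} := fun n => π^[n] ⟨u, hT⟩
  let α : ℕ → E := fun n => f (vs n).1 (vs n).2
  have hvs_succ : ∀ n, (vs (n + 1)).1 = r (α n) := by
    intro n
    show (π^[n + 1] _).1 = _
    rw [Function.iterate_succ_apply']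
  have hsα : ∀ n, s (α n) = (vs n).1 := fun n => hf1 _ _
  have hpath : ∀ n, r (α n) = s (α (n + 1)) := by
    intro n
    rw [hsα, hvs_succ]
  have hXfin := hAll.2.2 α hpath
  have hvert : ∀ n, (vs n).1 ∈ InfPathVerts s α := fun n => ⟨n, hsα n⟩
  have hHdisj : ∀ h ∈ H, h ∉ Root s r (InfPathVerts s α) := by
    rintro h hH ⟨w, ⟨n, hw⟩, hreach⟩
    have hwH : w ∈ H := hHer h w hH hreach
    rw [← hw, hsα] at hwH
    exact (vs n).2.1 hwH
  by_cases hrep : ∃ i j, i < j ∧ (vs i).1 = (vs j).1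
  · obtain ⟨i, j, hij, heq⟩ := hrep
    set L : List E := (List.range (j - i)).map (fun k => α (i + k)) with hL
    have hlenL : L.length = j - i := by simp [hL]
    have hgetL : ∀ m (hm : m < L.length), L[m] = α (i + m) := by
      intro m hm
      simp [hL]
    have hneL : L ≠ [] := by
      intro h
      rw [h] at hlenL
      simp at hlenL
      omega
    have hcL : L.Chain' (fun e f => r e = s f) := by
      refine List.isChain_iff_getElem.mpr ?_
      intro m hm
      rw [hgetL m (by omega), hgetL (m + 1) (by omega)]
      have he : i + (m + 1) = (i + m) + 1 := by omega
      rw [he]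
      exact hpath (i + m)
    have hclL : r (L.getLast hneL) = s (L.head hneL) := by
      rw [List.getLast_eq_getElem, List.head_eq_getElem,
        hgetL _ (by omega), hgetL _ (by omega)]
      have h1 : i + (L.length - 1) = j - 1 := by omega
      simp only [h1, Nat.add_zero]
      rw [hpath (j - 1)]
      have h2 : j - 1 + 1 = j := by omega
      rw [h2, hsα, hsα]
      exact heq.symm
    obtain ⟨c, hcmem⟩ := aux_cycle_of_walk s r L.length L rfl hneL hcL hclL
    have he0 : c.edges.head c.ne ∈ c.edges := List.head_mem _
    have he0L : c.edges.head c.ne ∈ L := hcmem _ he0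
    obtain ⟨m, hmlt, hme⟩ := List.mem_iff_getElem.mp he0L
    have hv : s (c.edges.head c.ne) ∈ c.verts := ⟨_, he0, rfl⟩
    have hsv : s (c.edges.head c.ne) = (vs (i + m)).1 := by
      rw [← hme, hgetL m hmlt, hsα]
    exact trapped_no_cycle s r hAll.1 hHer c hv (hsv ▸ (vs (i + m)).2)
  · push_neg at hrep
    have hinj : ∀ a b : ℕ, (vs a).1 = (vs b).1 → a = b := by
      intro a b hab
      by_contra hne2
      rcases Nat.lt_or_ge a b with h | h
      · exact hrep a b h hab
      · exact hrep b a (by omega) hab.symm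
    set D : Set ℕ := {n | dist s r H (vs n).1 = 1} with hD
    have hDunb : ∀ n, ∃ m, n ≤ m ∧ m ∈ D := by
      have key : ∀ k n, dist s r H (vs n).1 ≤ k → ∃ m, n ≤ m ∧ m ∈ D := by
        intro k
        induction k with
        | zero =>
          intro n h
          have := trapped_dist_pos s r (vs n).2
          omega
        | succ k ih =>
          intro n h
          by_cases h1 : dist s r H (vs n).1 = 1
          · exact ⟨n, le_refl n, h1⟩
          · have hlt : dist s r H (vs (n + 1)).1 < dist s r H (vs n).1 := by
              rw [hvs_succ]
              exact hf3 (vs n).1 (vs n).2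
                (by have := trapped_dist_pos s r (vs n).2; omega)
            obtain ⟨m, hm1, hm2⟩ := ih (n + 1) (by omega)
            exact ⟨m, by omega, hm2⟩
      intro n
      exact key (dist s r H (vs n).1) n le_rfl
    have hcross : ∀ n, ∃ e, n ∈ D → s e = (vs n).1 ∧ r e ∈ H := by
      intro n
      by_cases hn : n ∈ D
      · have hmem : ∃ h ∈ H, StepN s r (dist s r H (vs n).1) (vs n).1 h :=
          Nat.sInf_mem (trapped_dist_nonempty s r (vs n).2)
        obtain ⟨h, hH, hstep⟩ := hmem
        rw [show dist s r H (vs n).1 = 1 from hn, stepN_succ] at hstep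
        obtain ⟨e, hse, h0⟩ := hstep
        rw [stepN_zero] at h0
        exact ⟨e, fun _ => ⟨hse, h0 ▸ hH⟩⟩
      · exact ⟨α n, fun h => absurd h hn⟩
    choose g hg using hcross
    have hDfin : D.Finite := by
      refine Set.Finite.of_finite_image (f := g) ?_ ?_
      · refine hXfin.subset ?_
        rintro e ⟨n, hn, rfl⟩
        obtain ⟨hg1, hg2⟩ := hg n hn
        exact ⟨hg1 ▸ hvert n, hHdisj _ hg2⟩
      · intro a ha b hb hab
        have h1 := (hg a ha).1
        have h2 := (hg b hb).1
        rw [hab] at h1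
        exact hinj a b (h1.symm.trans h2)
    obtain ⟨B, hB⟩ := hDfin.bddAbove
    obtain ⟨m, hm1, hm2⟩ := hDunb (B + 1)
    have := hB hm2
    omega

end Dist

/-- If `E` is all-reflexive (conditions (a), (b), (c)), then for every
hereditary and saturated `H ⊆ E⁰` one has `R(H) − H ⊆ R(H⊥)`. -/
theorem root_diff_subset_root_perp (s r : E → V)
    (hAll : AllReflexiveGraph s r)
    (H : Set V) (hHer : Hereditary s r H) (hSat : Saturated s r H) :
    Root s r H \ H ⊆ Root s r (perp s r H) := by
  rintro u ⟨-, huH⟩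
  by_contra hnot
  refine no_trapped s r hAll hHer hSat (u := u) ⟨huH, ?_⟩
  intro w hw
  by_contra hwR
  exact hnot ⟨w, hwR, hw⟩

end GraphAnn
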